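/- Let (S, L, τ, ℓ) be a finitely branching labelled Markov chain over a countable state space and s, t ∈ S. The probabilistic bisimilarity distance satisfies d(s,t) < 1 if and only if there exists a policy T such that in the induced Markov chain on pairs, the probability of reaching a pair with different labels from (s,t) is strictly less than 1. In particular, if some policy T gives positive probability of reaching a bisimilar pair from (s,t), then d(s,t) < 1. -/

import Mathlib

open scoped ENNReal Classical

/-- `ω` is a coupling of `μ` and `ν`. -/
def IsCoupling {S : Type*} (μ ν : S → ℝ≥0∞) (ω : S × S → ℝ≥0∞) : Prop :=
  (∀ s, (∑' t, ω (s, t)) = μ s) ∧ (∀ t, (∑' s, ω (s, t)) = ν t)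

/-- `r` is a probabilistic bisimulation on the LMC with transitions `τ` and labels `ℓ`. -/
def IsBisimulation {S L : Type*} (τ : S → S → ℝ≥0∞) (ℓ : S → L) (r : S → S → Prop) : Prop :=
  Equivalence r ∧ ∀ s t, r s t → ℓ s = ℓ t ∧
    ∀ u, (∑' v : {v // r u v}, τ s v) = (∑' v : {v // r u v}, τ t v)

/-- Probabilistic bisimilarity: the largest probabilistic bisimulation. -/
def Bisim {S L : Type*} (τ : S → S → ℝ≥0∞) (ℓ : S → L) (s t : S) : Prop :=
  ∃ r, IsBisimulation τ ℓ r ∧ r s t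

/-- The distance operator `Δ`. -/
noncomputable def Delta {S L : Type*} (τ : S → S → ℝ≥0∞) (ℓ : S → L)
    (e : S → S → ℝ≥0∞) (s t : S) : ℝ≥0∞ :=
  if ℓ s ≠ ℓ t then 1
  else ⨅ ω ∈ {ω | IsCoupling (τ s) (τ t) ω}, ∑' p : S × S, ω p * e p.1 p.2

/-- A policy: a coupling for every same-labelled, non-bisimilar pair. -/
def IsPolicy {S L : Type*} (τ : S → S → ℝ≥0∞) (ℓ : S → L)
    (T : S → S → S × S → ℝ≥0∞) : Prop :=
  ∀ s t, ℓ s = ℓ t → ¬ Bisim τ ℓ s t → IsCoupling (τ s) (τ t) (T s t)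

/-- The operator `Θ^T` induced by a policy `T`. -/
noncomputable def Theta {S L : Type*} (τ : S → S → ℝ≥0∞) (ℓ : S → L)
    (T : S → S → S × S → ℝ≥0∞) (e : S → S → ℝ≥0∞) (s t : S) : ℝ≥0∞ :=
  if Bisim τ ℓ s t then 0
  else if ℓ s ≠ ℓ t then 1
  else ∑' p : S × S, T s t p * e p.1 p.2

/-- `x` is the least (pre-)fixed point of `f`. -/
def IsLfp {α : Type*} [Preorder α] (f : α → α) (x : α) : Prop :=
  f x ≤ x ∧ ∀ y, f y ≤ y → x ≤ y

/-- Probability of reaching the target set `Z` in exactly `n` steps in the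
Markov chain on pairs induced by a policy `T`, where bisimilar pairs and
differently-labelled pairs are absorbing. -/
noncomputable def reachN {S L : Type*} (τ : S → S → ℝ≥0∞) (ℓ : S → L)
    (T : S → S → S × S → ℝ≥0∞) (Z : S × S → Prop) : ℕ → S × S → ℝ≥0∞
  | 0, p => if Z p then 1 else 0
  | n + 1, p =>
      if Z p ∨ Bisim τ ℓ p.1 p.2 ∨ ℓ p.1 ≠ ℓ p.2 then 0
      else ∑' q : S × S, T p.1 p.2 q * reachN τ ℓ T Z n q

/-- Probability of ever reaching the target set `Z` from a pair. -/
noncomputable def Reach {S L : Type*} (τ : S → S → ℝ≥0∞) (ℓ : S → L)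
    (T : S → S → S × S → ℝ≥0∞) (Z : S × S → Prop) (p : S × S) : ℝ≥0∞ :=
  ∑' n : ℕ, reachN τ ℓ T Z n p
section Aux

variable {S L : Type*}

private lemma tsum_succ_le (f : ℕ → ℝ≥0∞) : ∑' n, f (n + 1) ≤ ∑' n, f n :=
  Summable.tsum_le_tsum_of_inj (fun n => n + 1) (fun a b h => by simpa using h) (fun c _ => zero_le)
    (fun b => le_rfl) ENNReal.summable ENNReal.summable

private lemma coupling_le_left {μ ν : S → ℝ≥0∞} {ω : S × S → ℝ≥0∞}
    (h : IsCoupling μ ν ω) (u v : S) : ω (u, v) ≤ μ u := by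
  rw [← h.1 u]; exact ENNReal.le_tsum v

private lemma coupling_le_right {μ ν : S → ℝ≥0∞} {ω : S × S → ℝ≥0∞}
    (h : IsCoupling μ ν ω) (u v : S) : ω (u, v) ≤ ν v := by
  rw [← h.2 v]; exact ENNReal.le_tsum u

private lemma coupling_mass {μ ν : S → ℝ≥0∞} {ω : S × S → ℝ≥0∞}
    (h : IsCoupling μ ν ω) (hμ : ∑' u, μ u = 1) : ∑' p : S × S, ω p = 1 := by
  rw [ENNReal.tsum_prod (f := fun u v => ω (u, v))]
  simp_rw [h.1]; exact hμ

private lemma prod_coupling {μ ν : S → ℝ≥0∞} (hμ : ∑' u, μ u = 1) (hν : ∑' v, ν v = 1) :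
    IsCoupling μ ν (fun p => μ p.1 * ν p.2) := by
  constructor
  · intro s; simp only [ENNReal.tsum_mul_left, hν, mul_one]
  · intro t; simp only [ENNReal.tsum_mul_right, hμ, one_mul]

private lemma bisim_refl (τ : S → S → ℝ≥0∞) (ℓ : S → L) (s : S) : Bisim τ ℓ s s :=
  ⟨Eq, ⟨eq_equivalence, fun a b hab => by subst hab; exact ⟨rfl, fun _ => rfl⟩⟩, rfl⟩

private lemma bisim_label {τ : S → S → ℝ≥0∞} {ℓ : S → L} {s t : S}
    (h : Bisim τ ℓ s t) : ℓ s = ℓ t := by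
  obtain ⟨r, hr, hst⟩ := h; exact (hr.2 s t hst).1

private lemma delta_mono (τ : S → S → ℝ≥0∞) (ℓ : S → L) {e e' : S → S → ℝ≥0∞}
    (h : e ≤ e') : Delta τ ℓ e ≤ Delta τ ℓ e' := by
  intro u v
  unfold Delta
  split
  · exact le_rfl
  · refine iInf_mono fun ω => iInf_mono fun _ => ENNReal.tsum_le_tsum fun p => ?_
    exact mul_le_mul_right (h p.1 p.2) _

private lemma d_fixed {τ : S → S → ℝ≥0∞} {ℓ : S → L} {d : S → S → ℝ≥0∞}
    (hd : IsLfp (Delta τ ℓ) d) : Delta τ ℓ d = d :=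
  le_antisymm hd.1 (hd.2 (Delta τ ℓ d) (delta_mono τ ℓ hd.1))

private lemma d_le_one {τ : S → S → ℝ≥0∞} {ℓ : S → L} (hdistr : ∀ s, (∑' t, τ s t) = 1)
    {d : S → S → ℝ≥0∞} (hd : IsLfp (Delta τ ℓ) d) (u v : S) : d u v ≤ 1 := by
  have hpre : Delta τ ℓ (fun _ _ => 1) ≤ fun _ _ => 1 := by
    intro a b
    unfold Delta
    split
    · exact le_rfl
    · refine le_trans (iInf₂_le _ (prod_coupling (hdistr a) (hdistr b))) ?_
      simp only [mul_one]
      exact le_of_eq (coupling_mass (prod_coupling (hdistr a) (hdistr b)) (hdistr a))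
  exact hd.2 _ hpre u v

private lemma d_eq_one_of_ne {τ : S → S → ℝ≥0∞} {ℓ : S → L} {d : S → S → ℝ≥0∞}
    (hd : IsLfp (Delta τ ℓ) d) {u v : S} (h : ℓ u ≠ ℓ v) : d u v = 1 := by
  conv_lhs => rw [← d_fixed hd]
  unfold Delta
  rw [if_pos h]

end Aux
section BisimCoupling

variable {S L : Type*}

private lemma tsum_ite_subtype {r : S → Prop} (g : S → ℝ≥0∞) :
    ∑' v, (if r v then g v else 0) = ∑' v : {v | r v}, g v := by
  rw [tsum_subtype]
  exact tsum_congr fun v => by rw [Set.indicator_apply]; rfl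

private lemma bisim_coupling {τ : S → S → ℝ≥0∞} {ℓ : S → L}
    (hdistr : ∀ s, (∑' t, τ s t) = 1) {s t : S} (h : Bisim τ ℓ s t) :
    ∃ ω, IsCoupling (τ s) (τ t) ω ∧ ∀ p : S × S, ω p ≠ 0 → Bisim τ ℓ p.1 p.2 := by
  obtain ⟨r, hr, hst⟩ := h
  set m : S → ℝ≥0∞ := fun u => ∑' v : {v | r u v}, τ s v with hm
  have hm_le : ∀ u, m u ≤ 1 := by
    intro u
    refine le_trans (Summable.tsum_le_tsum_of_inj _ Subtype.coe_injective (fun c _ => zero_le)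
      (fun b => le_rfl) ENNReal.summable ENNReal.summable) (le_of_eq (hdistr s))
  have hm_top : ∀ u, m u ≠ ⊤ := fun u => ne_top_of_le_ne_top ENNReal.one_ne_top (hm_le u)
  have htrans : ∀ u, m u = ∑' v : {v | r u v}, τ t v := fun u => (hr.2 s t hst).2 u
  have hclass : ∀ {u v}, r u v → m u = m v := by
    intro u v huv
    have hset : {w | r u w} = {w | r v w} := by
      ext w
      exact ⟨fun hw => hr.1.trans (hr.1.symm huv) hw, fun hw => hr.1.trans huv hw⟩
    have h1 : ∀ w, m w = ∑' x, Set.indicator {w' | r w w'} (τ s) x := fun w => tsum_subtype _ _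
    rw [h1 u, h1 v, hset]
  have hτs_le : ∀ u, τ s u ≤ m u := fun u => ENNReal.le_tsum (⟨u, hr.1.refl u⟩ : {v | r u v})
  have hτt_le : ∀ u, τ t u ≤ m u := fun u =>
    (htrans u) ▸ ENNReal.le_tsum (⟨u, hr.1.refl u⟩ : {v | r u v})
  refine ⟨fun p => if r p.1 p.2 then τ s p.1 * τ t p.2 / m p.1 else 0, ⟨?_, ?_⟩, ?_⟩
  · -- first marginal
    intro u
    have : ∑' v, (if r u v then τ s u * τ t v / m u else 0)
        = ∑' v : {v | r u v}, (τ s u / m u) * τ t v := by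
      rw [tsum_ite_subtype]
      refine tsum_congr fun v => ?_
      rw [div_eq_mul_inv, div_eq_mul_inv]; ring
    rw [this, ENNReal.tsum_mul_left, ← htrans u]
    rcases eq_or_ne (m u) 0 with h0 | h0
    · have : τ s u = 0 := le_antisymm (h0 ▸ hτs_le u) (zero_le)
      rw [h0, this, mul_zero]
    · rw [ENNReal.div_mul_cancel h0 (hm_top u)]
  · -- second marginal
    intro v
    have heq : (fun u => if r u v then τ s u * τ t v / m u else 0)
        = fun u => if r v u then τ s u * (τ t v / m v) else 0 := by
      funext u
      by_cases huv : r u v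
      · rw [if_pos huv, if_pos (hr.1.symm huv), hclass huv, div_eq_mul_inv,
          div_eq_mul_inv, mul_assoc]
      · rw [if_neg huv, if_neg (fun hvu => huv (hr.1.symm hvu))]
    rw [heq, tsum_ite_subtype (fun u => τ s u * (τ t v / m v)), ENNReal.tsum_mul_right]
    rcases eq_or_ne (m v) 0 with h0 | h0
    · have : τ t v = 0 := le_antisymm (h0 ▸ hτt_le v) (zero_le)
      rw [h0, this, ENNReal.zero_div, mul_zero]
    · have hfold : (∑' (i : ↑{v' | r v v'}), τ s ↑i) = m v := rfl
      rw [hfold, mul_comm, div_eq_mul_inv, mul_assoc, ENNReal.inv_mul_cancel h0 (hm_top v),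
        mul_one]
  · intro p hp
    by_cases hpr : r p.1 p.2
    · exact ⟨r, hr, hpr⟩
    · exact absurd (if_neg hpr) hp

end BisimCoupling
section ReachLemmas

variable {S L : Type*}

private lemma reach_eq_zero_of_bisim {τ : S → S → ℝ≥0∞} {ℓ : S → L}
    {T : S → S → S × S → ℝ≥0∞} {Z : S × S → Prop}
    (hZ : ∀ p : S × S, Bisim τ ℓ p.1 p.2 → ¬ Z p) {p : S × S}
    (hb : Bisim τ ℓ p.1 p.2) : Reach τ ℓ T Z p = 0 := by
  have hall : ∀ n, reachN τ ℓ T Z n p = 0 := by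
    intro n
    cases n with
    | zero => simp [reachN, hZ p hb]
    | succ n => simp [reachN, hb]
  simp [Reach, hall]

private lemma one_le_reach {τ : S → S → ℝ≥0∞} {ℓ : S → L}
    {T : S → S → S × S → ℝ≥0∞} {Z : S × S → Prop} {p : S × S} (hZ : Z p) :
    1 ≤ Reach τ ℓ T Z p := by
  have h0 : reachN τ ℓ T Z 0 p = 1 := by simp [reachN, hZ]
  exact h0 ▸ ENNReal.le_tsum 0

private lemma reach_rec_le {τ : S → S → ℝ≥0∞} {ℓ : S → L}
    {T : S → S → S × S → ℝ≥0∞} {Z : S × S → Prop} {u v : S}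
    (hu : ¬ Z (u, v)) (hb : ¬ Bisim τ ℓ u v) (hl : ℓ u = ℓ v) :
    ∑' q : S × S, T u v q * Reach τ ℓ T Z q ≤ Reach τ ℓ T Z (u, v) := by
  have hrec : ∀ n, reachN τ ℓ T Z (n + 1) (u, v) = ∑' q, T u v q * reachN τ ℓ T Z n q := by
    intro n
    have : ¬ (Z (u, v) ∨ Bisim τ ℓ u v ∨ ℓ u ≠ ℓ v) := by
      push_neg; exact ⟨hu, hb, hl⟩
    simp only [reachN, if_neg this]
  calc ∑' q : S × S, T u v q * Reach τ ℓ T Z q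
      = ∑' (q : S × S) (n : ℕ), T u v q * reachN τ ℓ T Z n q := by
        simp only [Reach, ENNReal.tsum_mul_left]
    _ = ∑' (n : ℕ) (q : S × S), T u v q * reachN τ ℓ T Z n q := ENNReal.tsum_comm
    _ = ∑' n, reachN τ ℓ T Z (n + 1) (u, v) := tsum_congr fun n => (hrec n).symm
    _ ≤ ∑' n, reachN τ ℓ T Z n (u, v) := tsum_succ_le _
    _ = Reach τ ℓ T Z (u, v) := rfl

private lemma partial_reach_le_one {τ : S → S → ℝ≥0∞} {ℓ : S → L}
    (hdistr : ∀ s, (∑' t, τ s t) = 1) {T : S → S → S × S → ℝ≥0∞}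
    (hT : IsPolicy τ ℓ T) (Z : S × S → Prop) :
    ∀ (N : ℕ) (p : S × S), ∑ n ∈ Finset.range N, reachN τ ℓ T Z n p ≤ 1 := by
  intro N
  induction N with
  | zero => intro p; simp
  | succ N ih =>
    intro p
    rw [Finset.sum_range_succ']
    by_cases hg : Z p ∨ Bisim τ ℓ p.1 p.2 ∨ ℓ p.1 ≠ ℓ p.2
    · have h0 : ∀ n, reachN τ ℓ T Z (n + 1) p = 0 := by
        intro n; simp only [reachN, if_pos hg]
      simp only [h0, Finset.sum_const_zero, zero_add]
      by_cases hZ : Z p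
      · simp [reachN, hZ]
      · simp [reachN, hZ]
    · push_neg at hg
      obtain ⟨hZ, hB, hl⟩ := hg
      have h00 : reachN τ ℓ T Z 0 p = 0 := by simp [reachN, hZ]
      rw [h00, add_zero]
      have hrec : ∀ n, reachN τ ℓ T Z (n + 1) p = ∑' q, T p.1 p.2 q * reachN τ ℓ T Z n q := by
        intro n
        have hng : ¬ (Z p ∨ Bisim τ ℓ p.1 p.2 ∨ ℓ p.1 ≠ ℓ p.2) := by
          push_neg; exact ⟨hZ, hB, hl⟩
        simp only [reachN, if_neg hng]
      have hcpl := hT p.1 p.2 hl hB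
      calc ∑ n ∈ Finset.range N, reachN τ ℓ T Z (n + 1) p
          = ∑ n ∈ Finset.range N, ∑' q, T p.1 p.2 q * reachN τ ℓ T Z n q := by
            exact Finset.sum_congr rfl fun n _ => hrec n
        _ = ∑' q, ∑ n ∈ Finset.range N, T p.1 p.2 q * reachN τ ℓ T Z n q :=
            (Summable.tsum_finsetSum fun _ _ => ENNReal.summable).symm
        _ = ∑' q, T p.1 p.2 q * ∑ n ∈ Finset.range N, reachN τ ℓ T Z n q := by
            exact tsum_congr fun q => (Finset.mul_sum _ _ _).symm
        _ ≤ ∑' q, T p.1 p.2 q * 1 :=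
            ENNReal.tsum_le_tsum fun q => mul_le_mul_right (ih q) _
        _ = 1 := by simpa using coupling_mass hcpl (hdistr p.1)

private lemma reach_le_one {τ : S → S → ℝ≥0∞} {ℓ : S → L}
    (hdistr : ∀ s, (∑' t, τ s t) = 1) {T : S → S → S × S → ℝ≥0∞}
    (hT : IsPolicy τ ℓ T) (Z : S × S → Prop) (p : S × S) : Reach τ ℓ T Z p ≤ 1 :=
  Summable.tsum_le_of_sum_range_le ENNReal.summable (fun N => partial_reach_le_one hdistr hT Z N p)

private lemma reachN_add_le {τ : S → S → ℝ≥0∞} {ℓ : S → L} {T : S → S → S × S → ℝ≥0∞} :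
    ∀ (n : ℕ) (p : S × S),
      reachN τ ℓ T (fun p => ℓ p.1 ≠ ℓ p.2) n p + reachN τ ℓ T (fun p => Bisim τ ℓ p.1 p.2) n p
        ≤ reachN τ ℓ T (fun p => ℓ p.1 ≠ ℓ p.2 ∨ Bisim τ ℓ p.1 p.2) n p := by
  intro n
  induction n with
  | zero =>
    intro p
    by_cases h1 : ℓ p.1 ≠ ℓ p.2
    · have h2 : ¬ Bisim τ ℓ p.1 p.2 := fun hb => h1 (bisim_label hb)
      simp [reachN, h1, h2]
    · by_cases h2 : Bisim τ ℓ p.1 p.2 <;> simp [reachN, h1, h2]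
  | succ n ih =>
    intro p
    by_cases hg : Bisim τ ℓ p.1 p.2 ∨ ℓ p.1 ≠ ℓ p.2
    · have g1 : (ℓ p.1 ≠ ℓ p.2) ∨ Bisim τ ℓ p.1 p.2 ∨ ℓ p.1 ≠ ℓ p.2 := Or.inr hg
      have g2 : Bisim τ ℓ p.1 p.2 ∨ Bisim τ ℓ p.1 p.2 ∨ ℓ p.1 ≠ ℓ p.2 := Or.inr hg
      have g3 : (ℓ p.1 ≠ ℓ p.2 ∨ Bisim τ ℓ p.1 p.2) ∨ Bisim τ ℓ p.1 p.2 ∨ ℓ p.1 ≠ ℓ p.2 :=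
        Or.inr hg
      simp only [reachN, if_pos g1, if_pos g2, if_pos g3, add_zero, le_refl]
    · have g1 : ¬ ((ℓ p.1 ≠ ℓ p.2) ∨ Bisim τ ℓ p.1 p.2 ∨ ℓ p.1 ≠ ℓ p.2) := by tauto
      have g2 : ¬ (Bisim τ ℓ p.1 p.2 ∨ Bisim τ ℓ p.1 p.2 ∨ ℓ p.1 ≠ ℓ p.2) := by tauto
      have g3 : ¬ ((ℓ p.1 ≠ ℓ p.2 ∨ Bisim τ ℓ p.1 p.2) ∨ Bisim τ ℓ p.1 p.2 ∨ ℓ p.1 ≠ ℓ p.2) := by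
        tauto
      simp only [reachN, if_neg g1, if_neg g2, if_neg g3]
      rw [← ENNReal.tsum_add]
      refine ENNReal.tsum_le_tsum fun q => ?_
      rw [← mul_add]
      exact mul_le_mul_right (ih q) _

end ReachLemmas
section MinCoupling

variable {S L : Type*}

private lemma exists_min_coupling {τ : S → S → ℝ≥0∞}
    (hdistr : ∀ s, (∑' t, τ s t) = 1) (hfin : ∀ s, {t | τ s t ≠ 0}.Finite)
    (d : S → S → ℝ≥0∞) (hd1 : ∀ u v, d u v ≤ 1) (u v : S) :
    ∃ ω₀, IsCoupling (τ u) (τ v) ω₀ ∧ ∀ ω, IsCoupling (τ u) (τ v) ω →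
      (∑' p : S × S, ω₀ p * d p.1 p.2) ≤ ∑' p : S × S, ω p * d p.1 p.2 := by
  classical
  set A : Finset S := (hfin u).toFinset with hA
  set B : Finset S := (hfin v).toFinset with hB
  have hmemA : ∀ a, a ∈ A ↔ τ u a ≠ 0 := fun a => (hfin u).mem_toFinset
  have hmemB : ∀ b, b ∈ B ↔ τ v b ≠ 0 := fun b => (hfin v).mem_toFinset
  set K : Set (S × S → ℝ≥0∞) :=
    {ω | (∀ p : S × S, (p.1 ∉ A ∨ p.2 ∉ B) → ω p = 0) ∧
      (∀ a, ∑ b ∈ B, ω (a, b) = τ u a) ∧ (∀ b, ∑ a ∈ A, ω (a, b) = τ v b)} with hK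
  -- membership in K is equivalent to being a coupling
  have hKcoup : ∀ ω, ω ∈ K ↔ IsCoupling (τ u) (τ v) ω := by
    intro ω
    constructor
    · rintro ⟨hzero, hrow, hcol⟩
      constructor
      · intro a
        rw [tsum_eq_sum (s := B) (fun b hb => hzero (a, b) (Or.inr hb))]
        exact hrow a
      · intro b
        rw [tsum_eq_sum (s := A) (fun a ha => hzero (a, b) (Or.inl ha))]
        exact hcol b
    · intro hω
      have hzero : ∀ p : S × S, (p.1 ∉ A ∨ p.2 ∉ B) → ω p = 0 := by
        rintro ⟨a, b⟩ (ha | hb)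
        · have : τ u a = 0 := by
            by_contra hc; exact ha ((hmemA a).mpr hc)
          exact le_antisymm (this ▸ coupling_le_left hω a b) (zero_le)
        · have : τ v b = 0 := by
            by_contra hc; exact hb ((hmemB b).mpr hc)
          exact le_antisymm (this ▸ coupling_le_right hω a b) (zero_le)
      refine ⟨hzero, fun a => ?_, fun b => ?_⟩
      · rw [← tsum_eq_sum (s := B) (L := SummationFilter.unconditional S) (fun b hb => hzero (a, b) (Or.inr hb))]
        exact hω.1 a
      · rw [← tsum_eq_sum (s := A) (L := SummationFilter.unconditional S) (fun a ha => hzero (a, b) (Or.inl ha))]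
        exact hω.2 b
  -- K is closed
  have hclosed : IsClosed K := by
    have h1 : IsClosed {ω : S × S → ℝ≥0∞ | ∀ p : S × S, (p.1 ∉ A ∨ p.2 ∉ B) → ω p = 0} := by
      have : {ω : S × S → ℝ≥0∞ | ∀ p : S × S, (p.1 ∉ A ∨ p.2 ∉ B) → ω p = 0}
          = ⋂ p ∈ {p : S × S | p.1 ∉ A ∨ p.2 ∉ B}, {ω : S × S → ℝ≥0∞ | ω p = 0} := by
        ext ω; simp [Set.mem_iInter]
      rw [this]
      exact isClosed_biInter fun p _ =>
        isClosed_singleton.preimage (continuous_apply p)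
    have h2 : IsClosed {ω : S × S → ℝ≥0∞ | ∀ a, ∑ b ∈ B, ω (a, b) = τ u a} := by
      have : {ω : S × S → ℝ≥0∞ | ∀ a, ∑ b ∈ B, ω (a, b) = τ u a}
          = ⋂ a, {ω : S × S → ℝ≥0∞ | ∑ b ∈ B, ω (a, b) = τ u a} := by
        ext ω; simp [Set.mem_iInter]
      rw [this]
      refine isClosed_iInter fun a => ?_
      exact isClosed_singleton.preimage
        (continuous_finset_sum B fun b _ => continuous_apply (a, b))
    have h3 : IsClosed {ω : S × S → ℝ≥0∞ | ∀ b, ∑ a ∈ A, ω (a, b) = τ v b} := by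
      have : {ω : S × S → ℝ≥0∞ | ∀ b, ∑ a ∈ A, ω (a, b) = τ v b}
          = ⋂ b, {ω : S × S → ℝ≥0∞ | ∑ a ∈ A, ω (a, b) = τ v b} := by
        ext ω; simp [Set.mem_iInter]
      rw [this]
      refine isClosed_iInter fun b => ?_
      exact isClosed_singleton.preimage
        (continuous_finset_sum A fun a _ => continuous_apply (a, b))
    have : K = {ω : S × S → ℝ≥0∞ | ∀ p : S × S, (p.1 ∉ A ∨ p.2 ∉ B) → ω p = 0}
        ∩ ({ω : S × S → ℝ≥0∞ | ∀ a, ∑ b ∈ B, ω (a, b) = τ u a}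
          ∩ {ω : S × S → ℝ≥0∞ | ∀ b, ∑ a ∈ A, ω (a, b) = τ v b}) := by
      ext ω
      simp only [hK, Set.mem_setOf_eq, Set.mem_inter_iff]
    rw [this]
    exact h1.inter (h2.inter h3)
  have hne : K.Nonempty :=
    ⟨fun p => τ u p.1 * τ v p.2, (hKcoup _).mpr (prod_coupling (hdistr u) (hdistr v))⟩
  -- the objective is continuous
  set f : (S × S → ℝ≥0∞) → ℝ≥0∞ := fun ω => ∑ p ∈ A ×ˢ B, ω p * d p.1 p.2 with hf
  have hcont : Continuous f := by
    refine continuous_finset_sum _ fun p _ => ?_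
    have hdp : d p.1 p.2 ≠ ⊤ := ne_top_of_le_ne_top ENNReal.one_ne_top (hd1 p.1 p.2)
    exact (ENNReal.continuous_mul_const hdp).comp (continuous_apply p)
  obtain ⟨ω₀, hω₀K, hmin⟩ := (hclosed.isCompact).exists_isMinOn hne hcont.continuousOn
  -- objective agrees with the tsum on K
  have hagree : ∀ ω ∈ K, (∑' p : S × S, ω p * d p.1 p.2) = f ω := by
    intro ω hωK
    refine tsum_eq_sum fun p hp => ?_
    have : ω p = 0 := by
      refine hωK.1 p ?_
      by_contra hc
      push_neg at hc
      exact hp (Finset.mem_product.mpr ⟨hc.1, hc.2⟩)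
    rw [this, zero_mul]
  refine ⟨ω₀, (hKcoup _).mp hω₀K, fun ω hω => ?_⟩
  have hωK : ω ∈ K := (hKcoup _).mpr hω
  rw [hagree _ hω₀K, hagree _ hωK]
  exact hmin hωK

end MinCoupling

/-- `d(s,t) < 1` iff some policy reaches the differently-labelled pairs from
`(s,t)` with probability < 1; in particular, if some policy reaches a
bisimilar pair with positive probability then `d(s,t) < 1`. -/
theorem stmt12 {S L : Type*} [Countable S] [Finite L]
    (τ : S → S → ℝ≥0∞) (ℓ : S → L)
    (hdistr : ∀ s, (∑' t, τ s t) = 1)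
    (hfin : ∀ s, {t | τ s t ≠ 0}.Finite)
    (d : S → S → ℝ≥0∞) (hd : IsLfp (Delta τ ℓ) d)
    (s t : S) :
    (d s t < 1 ↔ ∃ T : S → S → S × S → ℝ≥0∞, IsPolicy τ ℓ T ∧
        Reach τ ℓ T (fun p => ℓ p.1 ≠ ℓ p.2) (s, t) < 1) ∧
    ((∃ T : S → S → S × S → ℝ≥0∞, IsPolicy τ ℓ T ∧
        0 < Reach τ ℓ T (fun p => Bisim τ ℓ p.1 p.2) (s, t)) → d s t < 1) := by
  classical
  have hd1 : ∀ u v, d u v ≤ 1 := d_le_one hdistr hd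
  -- backward direction, reused twice
  have hback : ∀ T : S → S → S × S → ℝ≥0∞, IsPolicy τ ℓ T →
      Reach τ ℓ T (fun p => ℓ p.1 ≠ ℓ p.2) (s, t) < 1 → d s t < 1 := by
    intro T hT hR
    have hpre : Delta τ ℓ (fun a b => Reach τ ℓ T (fun p => ℓ p.1 ≠ ℓ p.2) (a, b))
        ≤ fun a b => Reach τ ℓ T (fun p => ℓ p.1 ≠ ℓ p.2) (a, b) := by
      intro a b
      unfold Delta
      by_cases hl : ℓ a ≠ ℓ b
      · rw [if_pos hl]
        exact one_le_reach hl
      · rw [if_neg hl]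
        push_neg at hl
        by_cases hb : Bisim τ ℓ a b
        · obtain ⟨ω, hω, hsupp⟩ := bisim_coupling hdistr hb
          refine le_trans (iInf₂_le ω hω) ?_
          have hz : ∀ q : S × S,
              ω q * Reach τ ℓ T (fun p => ℓ p.1 ≠ ℓ p.2) (q.1, q.2) = 0 := by
            intro q
            rcases eq_or_ne (ω q) 0 with h0 | h0
            · rw [h0, zero_mul]
            · have hbq := hsupp q h0
              have hr0 : Reach τ ℓ T (fun p => ℓ p.1 ≠ ℓ p.2) (q.1, q.2) = 0 :=
                reach_eq_zero_of_bisim (fun p hp hz => hz (bisim_label hp)) hbq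
              rw [hr0, mul_zero]
          calc (∑' q : S × S, ω q * Reach τ ℓ T (fun p => ℓ p.1 ≠ ℓ p.2) (q.1, q.2))
              = 0 := by simp [hz]
            _ ≤ _ := zero_le
        · refine le_trans (iInf₂_le (T a b) (hT a b hl hb)) ?_
          exact reach_rec_le (fun hc => hc hl) hb hl
    exact lt_of_le_of_lt (hd.2 _ hpre s t) hR
  -- forward direction
  have hfwd : d s t < 1 → ∃ T : S → S → S × S → ℝ≥0∞, IsPolicy τ ℓ T ∧
      Reach τ ℓ T (fun p => ℓ p.1 ≠ ℓ p.2) (s, t) < 1 := by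
    intro hlt
    set T : S → S → S × S → ℝ≥0∞ :=
      fun a b => Classical.choose (exists_min_coupling hdistr hfin d hd1 a b) with hTdef
    have hTspec : ∀ a b, IsCoupling (τ a) (τ b) (T a b) ∧
        ∀ ω, IsCoupling (τ a) (τ b) ω →
          (∑' p : S × S, T a b p * d p.1 p.2) ≤ ∑' p : S × S, ω p * d p.1 p.2 :=
      fun a b => Classical.choose_spec (exists_min_coupling hdistr hfin d hd1 a b)
    have hTpol : IsPolicy τ ℓ T := fun a b _ _ => (hTspec a b).1
    have hbound : ∀ (N : ℕ) (p : S × S),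
        ∑ n ∈ Finset.range N, reachN τ ℓ T (fun p => ℓ p.1 ≠ ℓ p.2) n p ≤ d p.1 p.2 := by
      intro N
      induction N with
      | zero => intro p; simp
      | succ N ih =>
        intro p
        rw [Finset.sum_range_succ']
        by_cases hl : ℓ p.1 ≠ ℓ p.2
        · have h0 : ∀ n, reachN τ ℓ T (fun p => ℓ p.1 ≠ ℓ p.2) (n + 1) p = 0 := by
            intro n; simp only [reachN, if_pos (Or.inr (Or.inr hl))]
          have h1 : reachN τ ℓ T (fun p => ℓ p.1 ≠ ℓ p.2) 0 p = 1 := by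
            simp only [reachN, if_pos hl]
          simp only [h0, Finset.sum_const_zero, zero_add, h1]
          rw [d_eq_one_of_ne hd hl]
        · push_neg at hl
          have hZp : ¬ (ℓ p.1 ≠ ℓ p.2) := fun hc => hc hl
          have h00 : reachN τ ℓ T (fun p => ℓ p.1 ≠ ℓ p.2) 0 p = 0 := by
            simp only [reachN, if_neg hZp]
          rw [h00, add_zero]
          by_cases hb : Bisim τ ℓ p.1 p.2
          · have h0 : ∀ n, reachN τ ℓ T (fun p => ℓ p.1 ≠ ℓ p.2) (n + 1) p = 0 := by
              intro n; simp only [reachN, if_pos (Or.inr (Or.inl hb))]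
            simp only [h0, Finset.sum_const_zero]
            exact zero_le
          · have hng : ¬ ((ℓ p.1 ≠ ℓ p.2) ∨ Bisim τ ℓ p.1 p.2 ∨ ℓ p.1 ≠ ℓ p.2) := by
              push_neg; exact ⟨hl, hb, hl⟩
            have hrec : ∀ n, reachN τ ℓ T (fun p => ℓ p.1 ≠ ℓ p.2) (n + 1) p
                = ∑' q, T p.1 p.2 q * reachN τ ℓ T (fun p => ℓ p.1 ≠ ℓ p.2) n q := by
              intro n; simp only [reachN, if_neg hng]
            have hstep : (∑' q : S × S, T p.1 p.2 q * d q.1 q.2) ≤ d p.1 p.2 := by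
              have hle_inf : (∑' q : S × S, T p.1 p.2 q * d q.1 q.2)
                  ≤ ⨅ ω ∈ {ω | IsCoupling (τ p.1) (τ p.2) ω}, ∑' q : S × S, ω q * d q.1 q.2 :=
                le_iInf₂ fun ω hω => (hTspec p.1 p.2).2 ω hω
              have hDelta : Delta τ ℓ d p.1 p.2
                  = ⨅ ω ∈ {ω | IsCoupling (τ p.1) (τ p.2) ω}, ∑' q : S × S, ω q * d q.1 q.2 := by
                unfold Delta; rw [if_neg hZp]
              calc (∑' q : S × S, T p.1 p.2 q * d q.1 q.2)
                  ≤ _ := hle_inf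
                _ = Delta τ ℓ d p.1 p.2 := hDelta.symm
                _ = d p.1 p.2 := congrFun (congrFun (d_fixed hd) p.1) p.2
            calc ∑ n ∈ Finset.range N, reachN τ ℓ T (fun p => ℓ p.1 ≠ ℓ p.2) (n + 1) p
                = ∑ n ∈ Finset.range N,
                    ∑' q, T p.1 p.2 q * reachN τ ℓ T (fun p => ℓ p.1 ≠ ℓ p.2) n q :=
                  Finset.sum_congr rfl fun n _ => hrec n
              _ = ∑' q, ∑ n ∈ Finset.range N,
                    T p.1 p.2 q * reachN τ ℓ T (fun p => ℓ p.1 ≠ ℓ p.2) n q :=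
                  (Summable.tsum_finsetSum fun _ _ => ENNReal.summable).symm
              _ = ∑' q, T p.1 p.2 q
                    * ∑ n ∈ Finset.range N, reachN τ ℓ T (fun p => ℓ p.1 ≠ ℓ p.2) n q :=
                  tsum_congr fun q => (Finset.mul_sum _ _ _).symm
              _ ≤ ∑' q : S × S, T p.1 p.2 q * d q.1 q.2 :=
                  ENNReal.tsum_le_tsum fun q => mul_le_mul_right (ih q) _
              _ ≤ d p.1 p.2 := hstep
    have hle : Reach τ ℓ T (fun p => ℓ p.1 ≠ ℓ p.2) (s, t) ≤ d s t :=
      Summable.tsum_le_of_sum_range_le ENNReal.summable fun N => hbound N (s, t)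
    exact ⟨T, hTpol, lt_of_le_of_lt hle hlt⟩
  refine ⟨⟨hfwd, fun ⟨T, hT, hR⟩ => hback T hT hR⟩, ?_⟩
  rintro ⟨T, hT, hpos⟩
  refine hback T hT ?_
  have key : Reach τ ℓ T (fun p => ℓ p.1 ≠ ℓ p.2) (s, t)
      + Reach τ ℓ T (fun p => Bisim τ ℓ p.1 p.2) (s, t) ≤ 1 := by
    calc Reach τ ℓ T (fun p => ℓ p.1 ≠ ℓ p.2) (s, t)
        + Reach τ ℓ T (fun p => Bisim τ ℓ p.1 p.2) (s, t)
        = ∑' n, (reachN τ ℓ T (fun p => ℓ p.1 ≠ ℓ p.2) n (s, t)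
            + reachN τ ℓ T (fun p => Bisim τ ℓ p.1 p.2) n (s, t)) := ENNReal.tsum_add.symm
      _ ≤ ∑' n, reachN τ ℓ T (fun p => ℓ p.1 ≠ ℓ p.2 ∨ Bisim τ ℓ p.1 p.2) n (s, t) :=
          ENNReal.tsum_le_tsum fun n => reachN_add_le n (s, t)
      _ ≤ 1 := reach_le_one hdistr hT _ _
  set a := Reach τ ℓ T (fun p => ℓ p.1 ≠ ℓ p.2) (s, t)
  set b := Reach τ ℓ T (fun p => Bisim τ ℓ p.1 p.2) (s, t)
  have ha : a ≤ 1 := le_trans (le_add_right le_rfl) key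
  rcases lt_or_eq_of_le ha with h | h
  · exact h
  · exfalso
    rw [h] at key
    have : b ≤ 0 := (ENNReal.add_le_add_iff_left ENNReal.one_ne_top).mp (by simpa using key)
    simp only [le_zero_iff] at this
    rw [this] at hpos
    exact lt_irrefl 0 hpos
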